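/- With the parameter values α1 = 0.2, α2 = 0.3, β1 = 0.3, β2 = 0.5, δ1 = 0.2, δ2 = 0.3, γ1 = 0.03, γ2 = 0.04, μ = 0.1, N = 10000, the Jacobian of the reduced system at the fixed point (0, D2*) with D2* = 78000/11 is lower triangular with both diagonal entries negative; hence this fixed point is a stable node (both eigenvalues negative, approximately −0.044 and −0.39). -/

import Mathlib

lemma key_deriv (a b c x0 : ℝ) :
    HasDerivAt (fun x : ℝ => a * x - (x / 10000) * (b * x + c))
      (a - (2 * b * x0 + c) / 10000) x0 := by
  have hx : HasDerivAt (fun x : ℝ => x / 10000) (1 / 10000) x0 := by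
    simpa using (hasDerivAt_id x0).div_const 10000
  have hy : HasDerivAt (fun x : ℝ => b * x + c) b x0 := by
    simpa using ((hasDerivAt_id x0).const_mul b).add_const c
  have h := ((hasDerivAt_id x0).const_mul a).sub (hx.mul hy)
  have e : (fun x : ℝ => a * x - (x / 10000) * (b * x + c)) =
      ((fun y => a * id y) - (fun x : ℝ => x / 10000) * fun x => b * x + c) := by
    funext x; simp [id]
  rw [e]
  exact h.congr_deriv (by ring)

theorem D2_axis_fixed_point_stable_node
    (α1 α2 β1 β2 δ1 δ2 γ1 γ2 μ N : ℝ)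
    (hα1 : α1 = 0.2) (hα2 : α2 = 0.3) (hβ1 : β1 = 0.3) (hβ2 : β2 = 0.5)
    (hδ1 : δ1 = 0.2) (hδ2 : δ2 = 0.3) (hγ1 : γ1 = 0.03) (hγ2 : γ2 = 0.04)
    (hμ : μ = 0.1) (hN : N = 10000)
    (f1 f2 : ℝ → ℝ → ℝ)
    (hf1 : ∀ D1 D2, f1 D1 D2 =
      (β1 - μ - δ1 * γ1 / (δ1 + μ)) * D1 -
        (D1 / N) * (β1 * (γ1 / (δ1 + μ) + 1) * D1 +
          (β1 * (γ2 / (δ2 + μ) + 1) - α1 + α2) * D2))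
    (hf2 : ∀ D1 D2, f2 D1 D2 =
      (β2 - μ - δ2 * γ2 / (δ2 + μ)) * D2 -
        (D2 / N) * ((β2 * (γ1 / (δ1 + μ) + 1) + α1 - α2) * D1 +
          β2 * (γ2 / (δ2 + μ) + 1) * D2))
    (D2star : ℝ) (hD2star : D2star = 78000 / 11) :
    ∃ j11 j22 : ℝ,
      -- lower triangular: the (1,2)-entry of the Jacobian vanishes
      HasDerivAt (fun D2 => f1 0 D2) 0 D2star ∧
      -- diagonal entries
      HasDerivAt (fun D1 => f1 D1 D2star) j11 0 ∧
      HasDerivAt (fun D2 => f2 0 D2) j22 D2star ∧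
      -- both diagonal entries negative: stable node
      j11 < 0 ∧ j22 < 0 := by
  subst hα1 hα2 hβ1 hβ2 hδ1 hδ2 hγ1 hγ2 hμ hN hD2star
  refine ⟨-1374 / 11000, -0.41, ?_, ?_, ?_, by norm_num, by norm_num⟩
  · have e : (fun D2 => f1 0 D2) = fun _ : ℝ => (0 : ℝ) := by
      funext x; rw [hf1]; ring
    rw [e]; exact hasDerivAt_const _ 0
  · have e : (fun D1 => f1 D1 (78000 / 11)) =
      fun x : ℝ => 0.18 * x - (x / 10000) * (0.33 * x + 33540 / 11) := by
      funext x; rw [hf1]; norm_num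
    rw [e]
    have h := key_deriv 0.18 0.33 (33540 / 11) 0
    convert h using 1
    norm_num
  · have e : (fun D2 => f2 0 D2) =
      fun x : ℝ => 0.37 * x - (x / 10000) * (0.55 * x + 0) := by
      funext x; rw [hf2]; norm_num
    rw [e]
    have h := key_deriv 0.37 0.55 0 (78000 / 11)
    convert h using 1
    norm_num
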